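/- Every subcomodule V of a coalgebra C is contained in the span of its coefficients: if {v_i}_{i∈I} is a basis of V and Δ(v_i) = Σ_{j∈I} v_j ⊗ a^j_i, then v_i = Σ_{j∈I} ε(v_j) a^j_i for every i; hence C is the directed union (direct limit) of the finite-dimensional coalgebras formed by the coefficients of its finite-dimensional subcomodules. -/

import Mathlib

open TensorProduct

set_option linter.unusedSectionVars false
set_option maxHeartbeats 1000000

namespace SuperCoalg

variable {k : Type} [Field k]
variable {C : Type} [AddCommGroup C] [Module k C] [Coalgebra k C]

/-- A submodule `W ≤ V` is a subcomodule for the structure map `β`. -/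
def IsSubcomodule {V : Type} [AddCommGroup V] [Module k V]
    (β : V →ₗ[k] V ⊗[k] C) (W : Submodule k V) : Prop :=
  ∀ w ∈ W, β w ∈ LinearMap.range (W.subtype.rTensor C)

/-- A submodule `S ≤ C` is a subcoalgebra: `Δ(S) ⊆ S ⊗ S`. -/
def IsSubcoalgebra (S : Submodule k C) : Prop :=
  ∀ x ∈ S, Coalgebra.comul (R := k) x ∈ LinearMap.range (TensorProduct.mapIncl S S)

/-- The coefficient space of a subcomodule `V ≤ C`: the smallest submodule `S` of `C`
with `Δ(V) ⊆ V ⊗ S`. -/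
def coeffSpan (V : Submodule k C) : Submodule k C :=
  sInf {S : Submodule k C |
    ∀ v ∈ V, Coalgebra.comul (R := k) v ∈ LinearMap.range (TensorProduct.mapIncl V S)}

/-! ### Contraction maps -/

/-- Contract the left tensor factor with a functional. -/
noncomputable def contrL (M : Type) [AddCommGroup M] [Module k M] (f : C →ₗ[k] k) :
    C ⊗[k] M →ₗ[k] M :=
  (TensorProduct.lid k M).toLinearMap ∘ₗ (f.rTensor M)

@[simp] lemma contrL_tmul (M : Type) [AddCommGroup M] [Module k M] (f : C →ₗ[k] k)
    (x : C) (m : M) : contrL M f (x ⊗ₜ[k] m) = f x • m := by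
  simp [contrL]

/-- Contract the right tensor factor with a functional. -/
noncomputable def contrR (M : Type) [AddCommGroup M] [Module k M] (f : C →ₗ[k] k) :
    M ⊗[k] C →ₗ[k] M :=
  (TensorProduct.rid k M).toLinearMap ∘ₗ (f.lTensor M)

@[simp] lemma contrR_tmul (M : Type) [AddCommGroup M] [Module k M] (f : C →ₗ[k] k)
    (x : C) (m : M) : contrR M f (m ⊗ₜ[k] x) = f x • m := by
  simp [contrR]

lemma contrL_counit (x : C) :
    contrL C (Coalgebra.counit (R := k)) (Coalgebra.comul (R := k) x) = x := by
  simp [contrL]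

lemma contrR_counit (x : C) :
    contrR C (Coalgebra.counit (R := k)) (Coalgebra.comul (R := k) x) = x := by
  simp [contrR]

lemma contrL_mapIncl_mem (f : C →ₗ[k] k) (V S : Submodule k C) (w : V ⊗[k] S) :
    contrL C f (TensorProduct.mapIncl V S w) ∈ S := by
  induction w using TensorProduct.induction_on with
  | zero => simp
  | tmul v s => simpa [mapIncl] using S.smul_mem _ s.2
  | add u v hu hv => rw [map_add, map_add]; exact S.add_mem hu hv

lemma tmul_mem_range_mapIncl {x y : C} (S T : Submodule k C) (hx : x ∈ S) (hy : y ∈ T) :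
    x ⊗ₜ[k] y ∈ LinearMap.range (TensorProduct.mapIncl S T) :=
  ⟨⟨x, hx⟩ ⊗ₜ ⟨y, hy⟩, rfl⟩

lemma tmul_mem_range_rTensor {x : C} (y : C) (W : Submodule k C) (hx : x ∈ W) :
    x ⊗ₜ[k] y ∈ LinearMap.range (W.subtype.rTensor C) :=
  ⟨⟨x, hx⟩ ⊗ₜ y, rfl⟩

/-! ### Decomposition of tensors along a basis -/

lemma exists_left_decomp {N M : Type} [AddCommGroup N] [Module k N] [AddCommGroup M] [Module k M]
    {ιB : Type} (B : Module.Basis ιB k N) (u : N ⊗[k] M) :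
    ∃ (I : Finset ιB) (m : ιB → M), u = ∑ i ∈ I, B i ⊗ₜ[k] m i := by
  classical
  induction u using TensorProduct.induction_on with
  | zero => exact ⟨∅, fun _ => 0, by simp⟩
  | tmul x y =>
      refine ⟨(B.repr x).support, fun i => B.repr x i • y, ?_⟩
      have hx : ((B.repr x).sum fun i c => c • B i) = x := by
        rw [← Finsupp.linearCombination_apply]; exact B.linearCombination_repr x
      calc x ⊗ₜ[k] y = (∑ i ∈ (B.repr x).support, B.repr x i • B i) ⊗ₜ[k] y := by
            rw [show (∑ i ∈ (B.repr x).support, B.repr x i • B i) = x from hx]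
        _ = ∑ i ∈ (B.repr x).support, B i ⊗ₜ[k] (B.repr x i • y) := by
            rw [TensorProduct.sum_tmul]
            exact Finset.sum_congr rfl fun i _ => by
              rw [TensorProduct.smul_tmul, TensorProduct.tmul_smul]
  | add u v hu hv =>
      obtain ⟨I, m, rfl⟩ := hu
      obtain ⟨J, n, rfl⟩ := hv
      refine ⟨I ∪ J, fun i => (if i ∈ I then m i else 0) + (if i ∈ J then n i else 0), ?_⟩
      have h1 : ∑ i ∈ I ∪ J, B i ⊗ₜ[k] (if i ∈ I then m i else 0)
          = ∑ i ∈ I, B i ⊗ₜ[k] m i := by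
        rw [← Finset.sum_subset Finset.subset_union_left (fun x _ hx => by simp [hx])]
        exact Finset.sum_congr rfl fun i hi => by simp [hi]
      have h2 : ∑ i ∈ I ∪ J, B i ⊗ₜ[k] (if i ∈ J then n i else 0)
          = ∑ i ∈ J, B i ⊗ₜ[k] n i := by
        rw [← Finset.sum_subset Finset.subset_union_right (fun x _ hx => by simp [hx])]
        exact Finset.sum_congr rfl fun i hi => by simp [hi]
      rw [← h1, ← h2, ← Finset.sum_add_distrib]
      exact Finset.sum_congr rfl fun i _ => by rw [TensorProduct.tmul_add]

lemma exists_right_decomp {N M : Type} [AddCommGroup N] [Module k N] [AddCommGroup M] [Module k M]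
    {ιB : Type} (B : Module.Basis ιB k N) (u : M ⊗[k] N) :
    ∃ (I : Finset ιB) (m : ιB → M), u = ∑ i ∈ I, m i ⊗ₜ[k] B i := by
  obtain ⟨I, m, hm⟩ := exists_left_decomp B ((TensorProduct.comm k M N) u)
  refine ⟨I, m, ?_⟩
  have h := congrArg (TensorProduct.comm k M N).symm hm
  rw [map_sum] at h
  simp only [TensorProduct.comm_symm_tmul, LinearEquiv.symm_apply_apply] at h
  exact h

lemma exists_fin_left_decomp {N M : Type} [AddCommGroup N] [Module k N] [AddCommGroup M]
    [Module k M] {ιB : Type} [Fintype ιB] (B : Module.Basis ιB k N) (u : N ⊗[k] M) :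
    ∃ (m : ιB → M), u = ∑ i, B i ⊗ₜ[k] m i := by
  classical
  obtain ⟨I, m, rfl⟩ := exists_left_decomp B u
  refine ⟨fun i => if i ∈ I then m i else 0, ?_⟩
  rw [← Finset.sum_subset (Finset.subset_univ I) (fun x _ hx => by simp [hx])]
  exact Finset.sum_congr rfl fun i hi => by simp [hi]

lemma exists_nested_decomp {ιB : Type} (B : Module.Basis ιB k C) (T : C ⊗[k] (C ⊗[k] C)) :
    ∃ (I J : Finset ιB) (m : ιB → ιB → C),
      T = ∑ i ∈ I, ∑ j ∈ J, B i ⊗ₜ[k] (m i j ⊗ₜ[k] B j) := by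
  classical
  obtain ⟨I, t, rfl⟩ := exists_left_decomp B T
  have h : ∀ i : ιB, ∃ (J : Finset ιB) (m : ιB → C), t i = ∑ j ∈ J, m j ⊗ₜ[k] B j :=
    fun i => exists_right_decomp B (t i)
  choose J m hm using h
  refine ⟨I, I.biUnion J, fun i j => if j ∈ J i then m i j else 0, ?_⟩
  refine Finset.sum_congr rfl fun i hi => ?_
  conv_rhs => rw [← TensorProduct.tmul_sum]
  congr 1
  rw [hm i,
    ← Finset.sum_subset (Finset.subset_biUnion_of_mem J hi) (fun x _ hx => by simp [hx])]
  exact Finset.sum_congr rfl fun j hj => by simp [hj]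

/-! ### Misc helpers -/

lemma coord_delta {N : Type} [AddCommGroup N] [Module k N] {ιB : Type} [DecidableEq ιB]
    (B : Module.Basis ιB k N)
    (i i' : ιB) : B.coord i (B i') = if i' = i then 1 else 0 := by
  simp [Module.Basis.coord_apply, Module.Basis.repr_self, Finsupp.single_apply]

lemma exists_retraction (V : Submodule k C) :
    ∃ π : C →ₗ[k] V, π ∘ₗ V.subtype = LinearMap.id :=
  V.subtype.exists_leftInverse_of_injective V.ker_subtype

lemma mem_repr_sum {V : Submodule k C} {ι : Type} (b : Module.Basis ι k V) {v : C} (hv : v ∈ V) :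
    v = ∑ i ∈ (b.repr ⟨v, hv⟩).support, b.repr ⟨v, hv⟩ i • (b i : C) := by
  have h := congrArg V.subtype (b.linearCombination_repr ⟨v, hv⟩)
  rw [Finsupp.linearCombination_apply, Finsupp.sum, map_sum] at h
  simpa using h.symm

lemma range_rTensor_mono {W₁ W₃ : Submodule k C} (h : W₁ ≤ W₃) :
    LinearMap.range (W₁.subtype.rTensor C) ≤ LinearMap.range (W₃.subtype.rTensor C) := by
  have heq : W₁.subtype = W₃.subtype ∘ₗ Submodule.inclusion h :=
    (Submodule.subtype_comp_inclusion _ _ h).symm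
  rw [heq, LinearMap.rTensor_comp]
  exact LinearMap.range_comp_le_range _ _

lemma range_mapIncl_mono {S T : Submodule k C} (V : Submodule k C) (h : S ≤ T) :
    LinearMap.range (TensorProduct.mapIncl V S) ≤ LinearMap.range (TensorProduct.mapIncl V T) := by
  have heq : TensorProduct.mapIncl V S
      = TensorProduct.mapIncl V T ∘ₗ TensorProduct.map LinearMap.id (Submodule.inclusion h) := by
    apply TensorProduct.ext'
    intro v x
    simp [mapIncl, Submodule.coe_inclusion]
  rw [heq]
  exact LinearMap.range_comp_le_range _ _

/-! ### Main lemmas for a subcomodule with a basis and coefficients -/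

section Main

variable {V : Submodule k C} {ι : Type} (b : Module.Basis ι k V) (s : ι → Finset ι) (a : ι → ι → C)

lemma part1
    (ha : ∀ i, Coalgebra.comul (R := k) (b i : C) = ∑ j ∈ s i, (b j : C) ⊗ₜ[k] a j i) :
    ∀ i, (b i : C) = ∑ j ∈ s i, Coalgebra.counit (R := k) (b j : C) • a j i := by
  intro i
  have h := congrArg (contrL C (Coalgebra.counit (R := k))) (ha i)
  rw [contrL_counit, map_sum] at h
  simpa using h

lemma key0
    (ha : ∀ i, Coalgebra.comul (R := k) (b i : C) = ∑ j ∈ s i, (b j : C) ⊗ₜ[k] a j i) :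
    ∀ v ∈ V, Coalgebra.comul (R := k) v ∈ LinearMap.range
      (TensorProduct.mapIncl V (Submodule.span k {x : C | ∃ i j, j ∈ s i ∧ x = a j i})) := by
  intro v hv
  rw [mem_repr_sum b hv, map_sum]
  refine Submodule.sum_mem _ fun i _ => ?_
  rw [map_smul]
  refine Submodule.smul_mem _ _ ?_
  rw [ha i]
  refine Submodule.sum_mem _ fun j hj => ?_
  exact tmul_mem_range_mapIncl _ _ (b j).2 (Submodule.subset_span ⟨i, j, hj, rfl⟩)

lemma part2
    (ha : ∀ i, Coalgebra.comul (R := k) (b i : C) = ∑ j ∈ s i, (b j : C) ⊗ₜ[k] a j i) :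
    coeffSpan V = Submodule.span k {x : C | ∃ i j, j ∈ s i ∧ x = a j i} := by
  classical
  apply le_antisymm
  · exact sInf_le (key0 b s a ha)
  · rw [Submodule.span_le]
    rintro x ⟨i, j, hj, rfl⟩
    rw [SetLike.mem_coe, coeffSpan, Submodule.mem_sInf]
    intro S hS
    obtain ⟨π, hπ⟩ := exists_retraction V
    obtain ⟨w, hw⟩ := hS (b i : C) (b i).2
    have hcoef : ∀ l : ι, (b.coord j ∘ₗ π) ((b l : V) : C) = if l = j then 1 else 0 := by
      intro l
      have h1 : π ((b l : V) : C) = b l := LinearMap.congr_fun hπ (b l)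
      simp [h1, coord_delta, Finsupp.single_apply]
    have hext : contrL C (b.coord j ∘ₗ π) (Coalgebra.comul (R := k) (b i : C)) = a j i := by
      rw [ha i, map_sum]
      rw [Finset.sum_congr rfl fun l _ => by rw [contrL_tmul, hcoef l]]
      simp only [ite_smul, one_smul, zero_smul]
      rw [Finset.sum_ite_eq' (s i) j fun l => a l i]
      exact if_pos hj
    rw [← hext, ← hw]
    exact contrL_mapIncl_mem _ _ _ _

lemma part2'
    (ha : ∀ i, Coalgebra.comul (R := k) (b i : C) = ∑ j ∈ s i, (b j : C) ⊗ₜ[k] a j i) :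
    ∀ v ∈ V, Coalgebra.comul (R := k) v ∈ LinearMap.range
      (TensorProduct.mapIncl V (coeffSpan V)) := by
  intro v hv
  exact range_mapIncl_mono V (le_of_eq (part2 b s a ha).symm) (key0 b s a ha v hv)

lemma part3
    (ha : ∀ i, Coalgebra.comul (R := k) (b i : C) = ∑ j ∈ s i, (b j : C) ⊗ₜ[k] a j i) :
    V ≤ coeffSpan V := by
  rw [part2 b s a ha]
  intro v hv
  rw [mem_repr_sum b hv]
  refine Submodule.sum_mem _ fun i _ => Submodule.smul_mem _ _ ?_
  rw [part1 b s a ha i]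
  exact Submodule.sum_mem _ fun j hj =>
    Submodule.smul_mem _ _ (Submodule.subset_span ⟨i, j, hj, rfl⟩)

lemma part4'
    (ha : ∀ i, Coalgebra.comul (R := k) (b i : C) = ∑ j ∈ s i, (b j : C) ⊗ₜ[k] a j i) :
    IsSubcoalgebra (coeffSpan V) := by
  classical
  rw [IsSubcoalgebra, part2 b s a ha]
  intro x hx
  refine Submodule.span_induction ?_ ?_ ?_ ?_ hx
  · rintro y ⟨i, j, hj, rfl⟩
    obtain ⟨π, hπ⟩ := exists_retraction V
    have hcoef : ∀ l : ι, (b.coord j ∘ₗ π) ((b l : V) : C) = if l = j then 1 else 0 := by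
      intro l
      have h1 : π ((b l : V) : C) = b l := LinearMap.congr_fun hπ (b l)
      simp [h1, coord_delta, Finsupp.single_apply]
    have eL : contrL (C ⊗[k] C) (b.coord j ∘ₗ π)
        ((Coalgebra.comul (R := k) (A := C)).lTensor C (Coalgebra.comul (R := k) (b i : C)))
        = Coalgebra.comul (R := k) (a j i) := by
      rw [ha i, map_sum]
      simp only [LinearMap.lTensor_tmul, map_sum, contrL_tmul, hcoef,
        ite_smul, one_smul, zero_smul]
      rw [Finset.sum_ite_eq' (s i) j fun l => Coalgebra.comul (R := k) (a l i)]
      exact if_pos hj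
    have eR : contrL (C ⊗[k] C) (b.coord j ∘ₗ π)
        ((Coalgebra.comul (R := k) (A := C)).lTensor C (Coalgebra.comul (R := k) (b i : C)))
        = ∑ l ∈ s i, ∑ m ∈ s l,
            (b.coord j ∘ₗ π) ((b m : V) : C) • ((a m l) ⊗ₜ[k] (a l i)) := by
      rw [← Coalgebra.coassoc_apply, ha i, map_sum]
      simp only [LinearMap.rTensor_tmul]
      rw [Finset.sum_congr rfl fun l _ => by rw [ha l, TensorProduct.sum_tmul]]
      simp only [map_sum, TensorProduct.assoc_tmul, contrL_tmul]
    rw [← eL, eR]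
    refine Submodule.sum_mem _ fun l hl => Submodule.sum_mem _ fun m hm =>
      Submodule.smul_mem _ _ ?_
    exact tmul_mem_range_mapIncl _ _ (Submodule.subset_span ⟨l, m, hm, rfl⟩)
      (Submodule.subset_span ⟨i, l, hl, rfl⟩)
  · rw [map_zero]; exact zero_mem _
  · intro x y _ _ hx hy; rw [map_add]; exact add_mem hx hy
  · intro r x _ hx; rw [map_smul]; exact Submodule.smul_mem _ _ hx

end Main

/-! ### Coefficient data for finite-dimensional subcomodules -/

lemma exists_data (W : Submodule k C) (hW : IsSubcomodule (Coalgebra.comul (R := k) (A := C)) W)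
    (hfd : FiniteDimensional k W) :
    ∃ (n : ℕ) (b : Module.Basis (Fin n) k W) (a : Fin n → Fin n → C),
      ∀ i, Coalgebra.comul (R := k) (b i : C)
        = ∑ j ∈ (Finset.univ : Finset (Fin n)), (b j : C) ⊗ₜ[k] a j i := by
  haveI := hfd
  set b := Module.finBasis k W with hb
  have h : ∀ i, ∃ x : Fin (Module.finrank k W) → C,
      Coalgebra.comul (R := k) (b i : C) = ∑ j, (b j : C) ⊗ₜ[k] x j := by
    intro i
    obtain ⟨w, hw⟩ := hW (b i : C) (b i).2
    obtain ⟨x, hx⟩ := exists_fin_left_decomp b w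
    refine ⟨x, ?_⟩
    rw [← hw, hx, map_sum]
    simp [LinearMap.rTensor_tmul]
  choose x hx using h
  exact ⟨_, b, fun j i => x i j, fun i => hx i⟩

lemma coeffSpan_findim (W : Submodule k C)
    (hW : IsSubcomodule (Coalgebra.comul (R := k) (A := C)) W)
    (hfd : FiniteDimensional k W) : FiniteDimensional k (coeffSpan W) := by
  obtain ⟨n, b, a, ha⟩ := exists_data W hW hfd
  rw [part2 b (fun _ => Finset.univ) a ha]
  apply FiniteDimensional.span_of_finite
  apply Set.Finite.subset (Set.finite_range fun p : Fin n × Fin n => a p.1 p.2)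
  rintro x ⟨i, j, _, rfl⟩
  exact ⟨(j, i), rfl⟩

lemma coeffSpan_mono {W₁ W₃ : Submodule k C} (h : W₁ ≤ W₃)
    (hW₁ : IsSubcomodule (Coalgebra.comul (R := k) (A := C)) W₁)
    (hS : ∀ v ∈ W₃, Coalgebra.comul (R := k) v ∈
      LinearMap.range (TensorProduct.mapIncl W₃ (coeffSpan W₃))) :
    coeffSpan W₁ ≤ coeffSpan W₃ := by
  apply sInf_le
  intro v hv
  obtain ⟨π, hπ⟩ := exists_retraction W₁
  set ρ : C →ₗ[k] C := W₁.subtype ∘ₗ π with hρ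
  have hρs : ρ ∘ₗ W₁.subtype = W₁.subtype := by
    rw [hρ, LinearMap.comp_assoc, hπ, LinearMap.comp_id]
  obtain ⟨u, hu⟩ := hW₁ v hv
  have hfix : (ρ.rTensor C) (Coalgebra.comul (R := k) v) = Coalgebra.comul (R := k) v := by
    rw [← hu, ← LinearMap.comp_apply, ← LinearMap.rTensor_comp, hρs]
  obtain ⟨w, hw⟩ := hS v (h hv)
  rw [← hfix, ← hw]
  clear hw hu hfix hv
  induction w using TensorProduct.induction_on with
  | zero => rw [map_zero, map_zero]; exact zero_mem _
  | tmul x t =>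
      refine ⟨π (x : C) ⊗ₜ t, ?_⟩
      simp [mapIncl, hρ, LinearMap.rTensor_tmul]
  | add u v hu hv => rw [map_add, map_add]; exact add_mem hu hv

lemma sup_subcomodule {W₁ W₂ : Submodule k C}
    (h1 : IsSubcomodule (Coalgebra.comul (R := k) (A := C)) W₁)
    (h2 : IsSubcomodule (Coalgebra.comul (R := k) (A := C)) W₂) :
    IsSubcomodule (Coalgebra.comul (R := k) (A := C)) (W₁ ⊔ W₂) := by
  intro w hw
  rw [Submodule.mem_sup] at hw
  obtain ⟨y, hy, z, hz, rfl⟩ := hw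
  rw [map_add]
  exact add_mem (range_rTensor_mono le_sup_left (h1 y hy))
    (range_rTensor_mono le_sup_right (h2 z hz))

/-! ### Every element lies in a finite-dimensional subcomodule -/

lemma exists_findim_subcomodule (c : C) :
    ∃ W : Submodule k C, IsSubcomodule (Coalgebra.comul (R := k) (A := C)) W ∧
      FiniteDimensional k W ∧ c ∈ W := by
  classical
  set B := Module.Basis.ofVectorSpace k C with hB
  obtain ⟨I, J, m, hT⟩ := exists_nested_decomp B
    ((LinearMap.lTensor C (Coalgebra.comul (R := k))) (Coalgebra.comul (R := k) c))
  set W := Submodule.span k {x : C | ∃ i ∈ I, ∃ j ∈ J, x = m i j} with hW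
  have hΔc : Coalgebra.comul (R := k) c
      = ∑ i ∈ I, ∑ j ∈ J, Coalgebra.counit (R := k) (B j) • ((B i : C) ⊗ₜ[k] m i j) := by
    have hid : contrR C (Coalgebra.counit (R := k)) ∘ₗ (Coalgebra.comul (R := k) (A := C))
        = LinearMap.id := LinearMap.ext contrR_counit
    have h1 : LinearMap.lTensor C (contrR C (Coalgebra.counit (R := k)))
        ((LinearMap.lTensor C (Coalgebra.comul (R := k))) (Coalgebra.comul (R := k) c))
        = Coalgebra.comul (R := k) c := by
      rw [← LinearMap.comp_apply, ← LinearMap.lTensor_comp, hid, LinearMap.lTensor_id,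
        LinearMap.id_apply]
    rw [← h1, hT]
    simp only [map_sum, LinearMap.lTensor_tmul, contrR_tmul, TensorProduct.tmul_smul]
  have hc : c ∈ W := by
    have h2 : c = ∑ i ∈ I, ∑ j ∈ J, Coalgebra.counit (R := k) (B j) •
        (Coalgebra.counit (R := k) (B i) • m i j) := by
      conv_lhs => rw [← contrL_counit (k := k) c]
      rw [hΔc]
      simp only [map_sum, map_smul, contrL_tmul]
    rw [h2]
    exact Submodule.sum_mem _ fun i hi => Submodule.sum_mem _ fun j hj =>
      Submodule.smul_mem _ _ (Submodule.smul_mem _ _ (Submodule.subset_span ⟨i, hi, j, hj, rfl⟩))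
  have hgen : ∀ i ∈ I, ∀ j ∈ J, Coalgebra.comul (R := k) (m i j)
      ∈ LinearMap.range (W.subtype.rTensor C) := by
    intro i hi j hj
    set χ : C ⊗[k] ((C ⊗[k] C) ⊗[k] C) →ₗ[k] C ⊗[k] C :=
      contrL (C ⊗[k] C) (B.coord i) ∘ₗ LinearMap.lTensor C (contrR (C ⊗[k] C) (B.coord j))
      with hχ
    have hχ_tmul : ∀ (x : C) (u : C ⊗[k] C) (z : C),
        χ (x ⊗ₜ[k] (u ⊗ₜ[k] z)) = B.coord i x • (B.coord j z • u) := by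
      intro x u z
      simp only [hχ, LinearMap.comp_apply, LinearMap.lTensor_tmul, contrR_tmul, contrL_tmul]
    set T₃ := LinearMap.lTensor C ((Coalgebra.comul (R := k) (A := C)).rTensor C)
      ((LinearMap.lTensor C (Coalgebra.comul (R := k))) (Coalgebra.comul (R := k) c)) with hT₃
    have wayA : χ T₃ = Coalgebra.comul (R := k) (m i j) := by
      rw [hT₃, hT]
      simp only [map_sum, LinearMap.lTensor_tmul, LinearMap.rTensor_tmul]
      rw [Finset.sum_congr rfl fun i' _ => Finset.sum_congr rfl fun j' _ => hχ_tmul _ _ _]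
      rw [Finset.sum_eq_single_of_mem i hi fun i' _ hi' => by simp [coord_delta, hi']]
      rw [Finset.sum_eq_single_of_mem j hj fun j' _ hj' => by simp [coord_delta, hj']]
      simp [coord_delta]
    have wayB : χ T₃ ∈ LinearMap.range (W.subtype.rTensor C) := by
      have e3 : T₃ = (LinearMap.lTensor C ((TensorProduct.assoc k C C C).symm.toLinearMap))
          ((LinearMap.lTensor C ((Coalgebra.comul (R := k) (A := C)).lTensor C))
            ((LinearMap.lTensor C (Coalgebra.comul (R := k))) (Coalgebra.comul (R := k) c)))
          := by
        rw [hT₃, ← LinearMap.comp_apply, ← LinearMap.lTensor_comp, ← Coalgebra.coassoc_symm]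
        simp only [LinearMap.lTensor_comp, LinearMap.comp_apply]
      rw [e3, hT]
      simp only [map_sum, LinearMap.lTensor_tmul, LinearEquiv.coe_coe]
      have hkey : ∀ (x y : C) (u : C ⊗[k] C),
          χ (x ⊗ₜ[k] ((TensorProduct.assoc k C C C).symm (y ⊗ₜ[k] u)))
          = B.coord i x • (y ⊗ₜ[k] (contrR C (B.coord j) u)) := by
        intro x y u
        induction u using TensorProduct.induction_on with
        | zero => simp
        | tmul z₁ z₂ =>
            simp [hχ_tmul, TensorProduct.assoc_symm_tmul, TensorProduct.tmul_smul]
        | add u v hu hv =>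
            rw [TensorProduct.tmul_add, map_add, TensorProduct.tmul_add, map_add, hu, hv,
              map_add, TensorProduct.tmul_add, smul_add]
      rw [Finset.sum_congr rfl fun i' _ => Finset.sum_congr rfl fun j' _ => hkey _ _ _]
      refine Submodule.sum_mem _ fun i' hi' => Submodule.sum_mem _ fun j' hj' =>
        Submodule.smul_mem _ _ ?_
      exact tmul_mem_range_rTensor _ _ (Submodule.subset_span ⟨i', hi', j', hj', rfl⟩)
    rw [← wayA]
    exact wayB
  have hsub : IsSubcomodule (Coalgebra.comul (R := k) (A := C)) W := by
    intro w hw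
    refine Submodule.span_induction ?_ ?_ ?_ ?_ hw
    · rintro x ⟨i, hi, j, hj, rfl⟩; exact hgen i hi j hj
    · rw [map_zero]; exact zero_mem _
    · intro x y _ _ hx hy; rw [map_add]; exact add_mem hx hy
    · intro r x _ hx; rw [map_smul]; exact Submodule.smul_mem _ _ hx
  have hfd : FiniteDimensional k W := by
    apply FiniteDimensional.span_of_finite
    apply Set.Finite.subset ((I ×ˢ J).finite_toSet.image fun p => m p.1 p.2)
    rintro x ⟨i, hi, j, hj, rfl⟩
    exact ⟨(i, j), by simp [hi, hj], rfl⟩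
  exact ⟨W, hsub, hfd, hc⟩

/-- Every subcomodule `V` of a coalgebra `C` is contained in the span of its coefficients:
if `{v i}` is a basis of `V` and `Δ (v i) = ∑ j, v j ⊗ a j i`, then
`v i = ∑ j, ε (v j) • a j i`; moreover the coefficient space of `V` is the span of the
`a j i`, and `V` lies inside it.  Consequently `C` is the directed union of the
finite-dimensional subcoalgebras formed by the coefficients of its
finite-dimensional subcomodules. -/
theorem subcomodule_contained_in_coefficients
    (V : Submodule k C) (hV : IsSubcomodule (Coalgebra.comul (R := k) (A := C)) V)
    {ι : Type} (b : Module.Basis ι k V) (s : ι → Finset ι) (a : ι → ι → C)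
    (ha : ∀ i, Coalgebra.comul (R := k) (b i : C) = ∑ j ∈ s i, (b j : C) ⊗ₜ[k] a j i) :
    (∀ i, (b i : C) = ∑ j ∈ s i, Coalgebra.counit (R := k) (b j : C) • a j i) ∧
    (coeffSpan V = Submodule.span k {x : C | ∃ i j, j ∈ s i ∧ x = a j i}) ∧
    (V ≤ coeffSpan V) ∧
    (∀ (W : Submodule k C), IsSubcomodule (Coalgebra.comul (R := k) (A := C)) W →
        FiniteDimensional k W →
      IsSubcoalgebra (coeffSpan W) ∧ FiniteDimensional k (coeffSpan W)) ∧
    (∀ (W₁ W₂ : Submodule k C),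
        IsSubcomodule (Coalgebra.comul (R := k) (A := C)) W₁ → FiniteDimensional k W₁ →
        IsSubcomodule (Coalgebra.comul (R := k) (A := C)) W₂ → FiniteDimensional k W₂ →
      ∃ W₃ : Submodule k C, IsSubcomodule (Coalgebra.comul (R := k) (A := C)) W₃ ∧
        FiniteDimensional k W₃ ∧ coeffSpan W₁ ≤ coeffSpan W₃ ∧ coeffSpan W₂ ≤ coeffSpan W₃) ∧
    ((⨆ (W : Submodule k C) (_ : IsSubcomodule (Coalgebra.comul (R := k) (A := C)) W ∧
        FiniteDimensional k W), coeffSpan W) = ⊤) := by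
  refine ⟨part1 b s a ha, part2 b s a ha, part3 b s a ha, ?_, ?_, ?_⟩
  · intro W hW hfd
    obtain ⟨n, bW, aW, haW⟩ := exists_data W hW hfd
    exact ⟨part4' bW (fun _ => Finset.univ) aW haW, coeffSpan_findim W hW hfd⟩
  · intro W₁ W₂ h1 f1 h2 f2
    haveI := f1; haveI := f2
    have hsup : IsSubcomodule (Coalgebra.comul (R := k) (A := C)) (W₁ ⊔ W₂) :=
      sup_subcomodule h1 h2
    have hfd3 : FiniteDimensional k ↥(W₁ ⊔ W₂) := inferInstance
    obtain ⟨n, b3, a3, ha3⟩ := exists_data (W₁ ⊔ W₂) hsup hfd3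
    have h2' := part2' b3 (fun _ => Finset.univ) a3 ha3
    exact ⟨W₁ ⊔ W₂, hsup, hfd3, coeffSpan_mono le_sup_left h1 h2',
      coeffSpan_mono le_sup_right h2 h2'⟩
  · rw [eq_top_iff]
    intro c _
    obtain ⟨W, hsub, hfd, hcW⟩ := exists_findim_subcomodule (k := k) c
    obtain ⟨n, bW, aW, haW⟩ := exists_data W hsub hfd
    have h3 : W ≤ coeffSpan W := part3 bW (fun _ => Finset.univ) aW haW
    have h4 : coeffSpan W ≤ ⨆ (W : Submodule k C)
        (_ : IsSubcomodule (Coalgebra.comul (R := k) (A := C)) W ∧ FiniteDimensional k W),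
        coeffSpan W :=
      le_iSup₂ (f := fun W _ => coeffSpan W) W ⟨hsub, hfd⟩
    exact h4 (h3 hcW)

end SuperCoalg
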